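/- arXiv:1203.2430 — 3 statements merged into one kernel-verified Lean document; each statement's English description precedes it below -/
import Mathlib

section
/- Fix a finite simple graph G with duplication forest Γ. For any duplicate sequence θ compatible with Γ, the quotient construction Π applied to the seed graph G₀^θ is independent of θ: the seed graph obtained by reversing the history along any compatible duplicate sequence is isomorphic to the graph Π(G) whose vertices are the trees T₁,…,T_k of Γ, with T_i adjacent to T_j (i ≠ j) iff some leaf of T_i is adjacent in G to some leaf of T_j. Consequently, for any two compatible duplicate sequences θ₁ and θ₂, the seed graphs G₀^{θ₁} and G₀^{θ₂} are isomorphic. -/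
open scoped Classical

universe u

variable {V : Type u}

/-- The merge (backward) operator `R_v^u(G)`: contract duplicate `v` into anchor `u`.
Vertex `v` becomes isolated (representing its removal from the vertex set). -/
def mergeG (G : SimpleGraph V) (u v : V) : SimpleGraph V where
  Adj x y := x ≠ y ∧ x ≠ v ∧ y ≠ v ∧
    (G.Adj x y ∨ (x = u ∧ G.Adj v y) ∨ (y = u ∧ G.Adj v x))
  symm := by
    constructor
    rintro x y ⟨h1, h2, h3, h4⟩
    refine ⟨h1.symm, h3, h2, ?_⟩
    rcases h4 with h | ⟨a, b⟩ | ⟨a, b⟩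
    · exact Or.inl h.symm
    · exact Or.inr (Or.inr ⟨a, b⟩)
    · exact Or.inr (Or.inl ⟨a, b⟩)
  loopless := by constructor; rintro x ⟨h, _⟩; exact h rfl

/-- δ(v): 1 if the duplicate `v` is adjacent to its anchor `u`. -/
noncomputable def deltaI (G : SimpleGraph V) (u v : V) : ℕ :=
  if G.Adj u v then 1 else 0

/-- e(v): number of common neighbours of anchor `u` and duplicate `v`. -/
noncomputable def extI [Fintype V] (G : SimpleGraph V) (u v : V) : ℕ :=
  (G.neighborFinset u ∩ G.neighborFinset v).card

/-- ℓ(v): number of vertices (other than `u`, `v`) adjacent to exactly one of `u`, `v`. -/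
noncomputable def lossI [Fintype V] (G : SimpleGraph V) (u v : V) : ℕ :=
  (((G.neighborFinset u ∪ G.neighborFinset v) \
      (G.neighborFinset u ∩ G.neighborFinset v)) \ {u, v}).card

/-- Apply the merge operators backward along a list of (anchor, duplicate) pairs. -/
noncomputable def graphAfter (G : SimpleGraph V) (steps : List (V × V)) : SimpleGraph V :=
  steps.foldl (fun g p => mergeG g p.1 p.2) G

noncomputable def deltaNum : SimpleGraph V → List (V × V) → ℕ
  | _, [] => 0
  | G, s :: rest => deltaI G s.1 s.2 + deltaNum (mergeG G s.1 s.2) rest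

noncomputable def extNum [Fintype V] : SimpleGraph V → List (V × V) → ℕ
  | _, [] => 0
  | G, s :: rest => extI G s.1 s.2 + extNum (mergeG G s.1 s.2) rest

noncomputable def lossNum [Fintype V] : SimpleGraph V → List (V × V) → ℕ
  | _, [] => 0
  | G, s :: rest => lossI G s.1 s.2 + lossNum (mergeG G s.1 s.2) rest

/-- The likelihood of a (backward) history: product of one-step DMC transition
probabilities `p_c^{δ_i} p^{e_i} q^{ℓ_i}` with `q = (1-p)/2`. -/
noncomputable def likelihood [Fintype V] (pc p : ℝ) : SimpleGraph V → List (V × V) → ℝ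
  | _, [] => 1
  | G, s :: rest =>
      pc ^ deltaI G s.1 s.2 * p ^ extI G s.1 s.2 * ((1 - p) / 2) ^ lossI G s.1 s.2 *
        likelihood pc p (mergeG G s.1 s.2) rest

/-- Rooted binary trees. -/
inductive BTree (V : Type u) : Type u
  | leaf : V → BTree V
  | node : BTree V → BTree V → BTree V

def BTree.leaves : BTree V → List V
  | .leaf v => [v]
  | .node l r => l.leaves ++ r.leaves

/-- A duplication forest: a list of rooted binary trees. -/
abbrev Forest (V : Type u) := List (BTree V)

def Forest.leaves (Γ : Forest V) : List V := Γ.flatMap BTree.leaves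

/-- Replace the cherry `{u, v}` of a tree by the single leaf `u`. -/
inductive ReplaceCherry : BTree V → V → V → BTree V → Prop
  | base_left (u v : V) : ReplaceCherry (.node (.leaf u) (.leaf v)) u v (.leaf u)
  | base_right (u v : V) : ReplaceCherry (.node (.leaf v) (.leaf u)) u v (.leaf u)
  | left {l l' r : BTree V} {u v : V} :
      ReplaceCherry l u v l' → ReplaceCherry (.node l r) u v (.node l' r)
  | right {l r r' : BTree V} {u v : V} :
      ReplaceCherry r u v r' → ReplaceCherry (.node l r) u v (.node l r')

/-- One backward step on a duplication forest: replace the cherry `{u,v}` in one tree. -/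
inductive ForestStep : Forest V → V → V → Forest V → Prop
  | head {t t' : BTree V} {ts : Forest V} {u v : V} :
      ReplaceCherry t u v t' → ForestStep (t :: ts) u v (t' :: ts)
  | tail {t : BTree V} {ts ts' : Forest V} {u v : V} :
      ForestStep ts u v ts' → ForestStep (t :: ts) u v (t :: ts')

/-- `FUnfold Γ steps Γ₀`: the (anchor, duplicate) list `steps`, processed backward in time,
is compatible with the duplication forest `Γ` and reduces it to `Γ₀`. -/
inductive FUnfold : Forest V → List (V × V) → Forest V → Prop
  | nil (Γ : Forest V) : FUnfold Γ [] Γ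
  | cons {Γ Γ' Γ₀ : Forest V} {u v : V} {steps : List (V × V)} :
      ForestStep Γ u v Γ' → FUnfold Γ' steps Γ₀ → FUnfold Γ ((u, v) :: steps) Γ₀

/-- A forest consisting only of isolated leaves (duplication forest of a seed graph). -/
def IsSeed (Γ : Forest V) : Prop := ∀ t ∈ Γ, ∃ v, t = BTree.leaf v

/-- Π(G): the quotient graph on the trees of the duplication forest `Γ`:
tree `i` is adjacent to tree `j` (for `i ≠ j`) iff some leaf of `T_i` is adjacent
in `G` to some leaf of `T_j`. -/
def quotientGraph (G : SimpleGraph V) (Γ : Forest V) : SimpleGraph (Fin Γ.length) where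
  Adj i j := i ≠ j ∧ ∃ x ∈ (Γ.get i).leaves, ∃ y ∈ (Γ.get j).leaves, G.Adj x y
  symm := by
    constructor
    rintro i j ⟨h, x, hx, y, hy, hxy⟩
    exact ⟨h.symm, y, hy, x, hx, hxy.symm⟩
  loopless := by constructor; rintro i ⟨h, _⟩; exact h rfl

namespace Stmt4Aux

variable {V : Type u}

lemma leaves_ne_nil (t : BTree V) : t.leaves ≠ [] := by
  induction t with
  | leaf v => simp [BTree.leaves]
  | node l r ihl ihr =>
      simp only [BTree.leaves, ne_eq, List.append_eq_nil_iff]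
      rintro ⟨h, -⟩; exact ihl h

lemma rc_perm {t t' : BTree V} {u v : V} (h : ReplaceCherry t u v t') :
    (t'.leaves ++ [v]).Perm t.leaves := by
  induction h with
  | base_left u v => simp [BTree.leaves]
  | base_right u v => simpa [BTree.leaves] using (List.Perm.swap v u [])
  | @left l l' r u v h ih =>
      show ((l'.leaves ++ r.leaves) ++ [v]).Perm (l.leaves ++ r.leaves)
      have p1 : ((l'.leaves ++ r.leaves) ++ [v]).Perm ((l'.leaves ++ [v]) ++ r.leaves) := by
        rw [List.append_assoc, List.append_assoc]
        exact List.Perm.append_left _ List.perm_append_comm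
      exact p1.trans (ih.append_right _)
  | @right l r r' u v h ih =>
      show (l.leaves ++ r'.leaves ++ [v]).Perm (l.leaves ++ r.leaves)
      rw [List.append_assoc]
      exact List.Perm.append_left _ ih

lemma rc_mem_u {t t' : BTree V} {u v : V} (h : ReplaceCherry t u v t') :
    u ∈ t'.leaves := by
  induction h with
  | base_left u v => simp [BTree.leaves]
  | base_right u v => simp [BTree.leaves]
  | left h ih => simp only [BTree.leaves, List.mem_append]; exact Or.inl ih
  | right h ih => simp only [BTree.leaves, List.mem_append]; exact Or.inr ih

end Stmt4Aux
namespace Stmt4Aux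

lemma fs_length {Γ Γ' : Forest V} {u v : V} (h : ForestStep Γ u v Γ') :
    Γ'.length = Γ.length := by
  induction h with
  | head _ => rfl
  | tail _ ih => simpa using ih

lemma fs_perm {Γ Γ' : Forest V} {u v : V} (h : ForestStep Γ u v Γ') :
    (Forest.leaves Γ' ++ [v]).Perm (Forest.leaves Γ) := by
  induction h with
  | @head t t' ts u v hrc =>
      show ((t'.leaves ++ Forest.leaves ts) ++ [v]).Perm (t.leaves ++ Forest.leaves ts)
      have p1 : ((t'.leaves ++ Forest.leaves ts) ++ [v]).Perm
          ((t'.leaves ++ [v]) ++ Forest.leaves ts) := by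
        rw [List.append_assoc, List.append_assoc]
        exact List.Perm.append_left _ List.perm_append_comm
      exact p1.trans ((rc_perm hrc).append_right _)
  | @tail t ts ts' u v hstep ih =>
      show (t.leaves ++ Forest.leaves ts' ++ [v]).Perm (t.leaves ++ Forest.leaves ts)
      rw [List.append_assoc]
      exact List.Perm.append_left _ ih

lemma fs_index {Γ Γ' : Forest V} {u v : V} (h : ForestStep Γ u v Γ') :
    ∃ i₀ : ℕ, ∃ (h1 : i₀ < Γ.length) (h2 : i₀ < Γ'.length),
      ReplaceCherry (Γ.get ⟨i₀, h1⟩) u v (Γ'.get ⟨i₀, h2⟩) ∧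
      ∀ j (hj : j < Γ.length) (hj' : j < Γ'.length), j ≠ i₀ →
        Γ'.get ⟨j, hj'⟩ = Γ.get ⟨j, hj⟩ := by
  induction h with
  | @head t t' ts u v hrc =>
      refine ⟨0, by simp, by simp, hrc, ?_⟩
      intro j hj hj' hne
      cases j with
      | zero => exact absurd rfl hne
      | succ j => rfl
  | @tail t ts ts' u v hstep ih =>
      obtain ⟨i₀, h1, h2, hrc, hother⟩ := ih
      refine ⟨i₀ + 1, by simpa using h1, by simpa using h2, hrc, ?_⟩
      intro j hj hj' hne
      cases j with
      | zero => rfl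
      | succ j =>
          exact hother j (by simpa using hj) (by simpa using hj')
            (fun hh => hne (by simp [hh]))

/- ### flatMap / nodup facts -/

lemma mem_forest_of_mem_get {Γ : Forest V} {i : ℕ} (hi : i < Γ.length) {x : V}
    (hx : x ∈ (Γ.get ⟨i, hi⟩).leaves) : x ∈ Forest.leaves Γ :=
  List.mem_flatMap.mpr ⟨Γ.get ⟨i, hi⟩, List.get_mem _ _, hx⟩

lemma exists_index_of_mem {Γ : Forest V} {x : V} (hx : x ∈ Forest.leaves Γ) :
    ∃ i, ∃ hi : i < Γ.length, x ∈ (Γ.get ⟨i, hi⟩).leaves := by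
  obtain ⟨t, ht, hxt⟩ := List.mem_flatMap.mp hx
  obtain ⟨⟨i, hi⟩, rfl⟩ := List.mem_iff_get.mp ht
  exact ⟨i, hi, hxt⟩

lemma nodup_get_leaves {Γ : Forest V} (hnd : (Forest.leaves Γ).Nodup)
    {i : ℕ} (hi : i < Γ.length) : ((Γ.get ⟨i, hi⟩).leaves).Nodup := by
  induction Γ generalizing i with
  | nil => simp at hi
  | cons t ts ih =>
      have hnd' : (t.leaves ++ Forest.leaves ts).Nodup := hnd
      rw [List.nodup_append] at hnd'
      cases i with
      | zero => exact hnd'.1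
      | succ i => exact ih hnd'.2.1 (by simpa using hi)

lemma index_unique {Γ : Forest V} (hnd : (Forest.leaves Γ).Nodup)
    {i j : ℕ} (hi : i < Γ.length) (hj : j < Γ.length) {x : V}
    (hxi : x ∈ (Γ.get ⟨i, hi⟩).leaves) (hxj : x ∈ (Γ.get ⟨j, hj⟩).leaves) : i = j := by
  induction Γ generalizing i j with
  | nil => simp at hi
  | cons t ts ih =>
      have hnd' : (t.leaves ++ Forest.leaves ts).Nodup := hnd
      rw [List.nodup_append] at hnd'
      cases i with
      | zero =>
          cases j with
          | zero => rfl
          | succ j =>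
              exact absurd (mem_forest_of_mem_get (Γ := ts) (by simpa using hj) hxj) (fun hm => hnd'.2.2 x hxi x hm rfl)
      | succ i =>
          cases j with
          | zero => exact absurd (mem_forest_of_mem_get (Γ := ts) (by simpa using hi) hxi) (fun hm => hnd'.2.2 x hxj x hm rfl)
          | succ j =>
              have := ih hnd'.2.1 (by simpa using hi) (by simpa using hj) hxi hxj
              simp [this]

end Stmt4Aux
namespace Stmt4Aux

lemma fs_nodup {Γ Γ' : Forest V} {u v : V} (h : ForestStep Γ u v Γ')
    (hnd : (Forest.leaves Γ).Nodup) : (Forest.leaves Γ' ++ [v]).Nodup :=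
  (fs_perm h).nodup_iff.mpr hnd

lemma step_quot {G : SimpleGraph V} {Γ Γ' : Forest V} {u v : V}
    (hnd : (Forest.leaves Γ).Nodup) (h : ForestStep Γ u v Γ')
    {i j : ℕ} (hi : i < Γ.length) (hj : j < Γ.length)
    (hi' : i < Γ'.length) (hj' : j < Γ'.length) :
    (quotientGraph (mergeG G u v) Γ').Adj ⟨i, hi'⟩ ⟨j, hj'⟩ ↔
      (quotientGraph G Γ).Adj ⟨i, hi⟩ ⟨j, hj⟩ := by
  classical
  obtain ⟨i₀, hI, hI', hrc, hother⟩ := fs_index h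
  have hnd' : (Forest.leaves Γ').Nodup :=
    ((List.sublist_append_left _ _).nodup (fs_nodup h hnd))
  have hpermI := rc_perm hrc
  have hndI : ((Γ.get ⟨i₀, hI⟩).leaves).Nodup := nodup_get_leaves hnd hI
  have hndI' : (((Γ'.get ⟨i₀, hI'⟩).leaves) ++ [v]).Nodup := hpermI.nodup_iff.mpr hndI
  have hvnotI' : v ∉ (Γ'.get ⟨i₀, hI'⟩).leaves := by
    rw [List.nodup_append] at hndI'
    intro hv; exact hndI'.2.2 v hv v (by simp) rfl
  have hvI : v ∈ (Γ.get ⟨i₀, hI⟩).leaves :=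
    hpermI.mem_iff.mp (by simp)
  have huI' : u ∈ (Γ'.get ⟨i₀, hI'⟩).leaves := rc_mem_u hrc
  have huI : u ∈ (Γ.get ⟨i₀, hI⟩).leaves := hpermI.mem_iff.mp (List.mem_append.mpr (Or.inl huI'))
  have huv : u ≠ v := fun hh => hvnotI' (hh ▸ huI')
  -- membership transfer per index
  have hmem : ∀ (x : V) (k : ℕ) (hk : k < Γ.length) (hk' : k < Γ'.length),
      x ∈ (Γ'.get ⟨k, hk'⟩).leaves ↔ x ∈ (Γ.get ⟨k, hk⟩).leaves ∧ x ≠ v := by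
    intro x k hk hk'
    by_cases hki : k = i₀
    · subst hki
      constructor
      · intro hx
        refine ⟨hpermI.mem_iff.mp (List.mem_append.mpr (Or.inl hx)), fun hh => hvnotI' (hh ▸ hx)⟩
      · rintro ⟨hx, hxv⟩
        rcases List.mem_append.mp (hpermI.mem_iff.mpr hx) with hh | hh
        · exact hh
        · exact absurd (List.mem_singleton.mp hh) hxv
    · rw [hother k hk hk' hki]
      have hvnot : v ∉ (Γ.get ⟨k, hk⟩).leaves := fun hv =>
        hki (index_unique hnd hk hI hv hvI)
      exact ⟨fun hx => ⟨hx, fun hh => hvnot (hh ▸ hx)⟩, fun hx => hx.1⟩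
  constructor
  · rintro ⟨hij, x, hx, y, hy, hadj⟩
    obtain ⟨hxy, hxv, hyv, hcase⟩ := hadj
    refine ⟨fun hh => hij (Fin.ext (show i = j from congrArg Fin.val hh)), ?_⟩
    rcases hcase with hGxy | ⟨rfl, hGvy⟩ | ⟨rfl, hGvx⟩
    · exact ⟨x, ((hmem x i hi hi').mp hx).1, y, ((hmem y j hj hj').mp hy).1, hGxy⟩
    · -- x = u; the tree of index i in Γ' contains u, hence i = i₀
      have : i = i₀ := index_unique hnd' hi' hI' hx huI'
      subst this
      exact ⟨v, hvI, y, ((hmem y j hj hj').mp hy).1, hGvy⟩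
    · have : j = i₀ := index_unique hnd' hj' hI' hy huI'
      subst this
      exact ⟨x, ((hmem x i hi hi').mp hx).1, v, hvI, hGvx.symm⟩
  · rintro ⟨hij, x, hx, y, hy, hadj⟩
    have hijn : i ≠ j := fun hh => hij (Fin.ext hh)
    refine ⟨fun hh => hijn (congrArg Fin.val hh), ?_⟩
    by_cases hxv : x = v
    · have hx' : v ∈ (Γ.get ⟨i, hi⟩).leaves := hxv ▸ hx
      have hadj' : G.Adj v y := hxv ▸ hadj
      have hii : i = i₀ := index_unique hnd hi hI hx' hvI
      have hyv : y ≠ v := fun hh => hijn (index_unique hnd hi hj hx' (hh ▸ hy))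
      have huy : u ≠ y := fun hh => hijn (index_unique hnd hi hj (hii ▸ huI) (hh ▸ hy))
      exact ⟨u, (hii ▸ huI' : u ∈ (Γ'.get ⟨i, hi'⟩).leaves), y, (hmem y j hj hj').mpr ⟨hy, hyv⟩,
        ⟨huy, huv, hyv, Or.inr (Or.inl ⟨rfl, hadj'⟩)⟩⟩
    · by_cases hyv : y = v
      · have hy' : v ∈ (Γ.get ⟨j, hj⟩).leaves := hyv ▸ hy
        have hadj' : G.Adj v x := hyv ▸ hadj.symm
        have hjj : j = i₀ := index_unique hnd hj hI hy' hvI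
        have hxu : x ≠ u := fun hh => hijn (index_unique hnd hi hj (hh ▸ hx) (hjj ▸ huI))
        exact ⟨x, (hmem x i hi hi').mpr ⟨hx, hxv⟩, u, (hjj ▸ huI' : u ∈ (Γ'.get ⟨j, hj'⟩).leaves),
          ⟨fun hh => hxu hh, hxv, huv, Or.inr (Or.inr ⟨rfl, hadj'⟩)⟩⟩
      · exact ⟨x, (hmem x i hi hi').mpr ⟨hx, hxv⟩, y, (hmem y j hj hj').mpr ⟨hy, hyv⟩,
          ⟨hadj.ne, hxv, hyv, Or.inl hadj⟩⟩

end Stmt4Aux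
namespace Stmt4Aux

lemma fs_mem_u {Γ Γ' : Forest V} {u v : V} (h : ForestStep Γ u v Γ') :
    u ∈ Forest.leaves Γ' := by
  obtain ⟨i₀, h1, h2, hrc, -⟩ := fs_index h
  exact mem_forest_of_mem_get h2 (rc_mem_u hrc)

lemma fs_subset {Γ Γ' : Forest V} {u v : V} (h : ForestStep Γ u v Γ') {x : V}
    (hx : x ∈ Forest.leaves Γ') : x ∈ Forest.leaves Γ :=
  (fs_perm h).subset (List.mem_append.mpr (Or.inl hx))

lemma funfold_subset {Γ Γ₀ : Forest V} {steps : List (V × V)} (h : FUnfold Γ steps Γ₀)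
    {x : V} (hx : x ∈ Forest.leaves Γ₀) : x ∈ Forest.leaves Γ := by
  induction h with
  | nil => exact hx
  | cons hstep hrest ih => exact fs_subset hstep (ih hx)

lemma isolated_pres {g : SimpleGraph V} {Γ' Γ₀ : Forest V} {rest : List (V × V)}
    (h : FUnfold Γ' rest Γ₀) {x : V} (hx : x ∉ Forest.leaves Γ')
    (hiso : ∀ y, ¬ g.Adj x y) : ∀ y, ¬ (graphAfter g rest).Adj x y := by
  induction h generalizing g with
  | nil => exact hiso
  | @cons Γ' Γ'' Γ₀ u' v' rest hstep hrest ih =>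
      refine ih (fun hh => hx (fs_subset hstep hh)) ?_
      rintro y ⟨hne, hxv, hyv, hc⟩
      rcases hc with hg | ⟨hxu, hg⟩ | ⟨hyu, hg⟩
      · exact hiso y hg
      · exact hx (fs_subset hstep (hxu ▸ fs_mem_u hstep))
      · exact hiso v' hg.symm

lemma funfold_main {G : SimpleGraph V} {Γ Γ₀ : Forest V} {steps : List (V × V)}
    (h : FUnfold Γ steps Γ₀) (hnd : (Forest.leaves Γ).Nodup) :
    Γ₀.length = Γ.length ∧ (Forest.leaves Γ₀).Nodup ∧
    (∀ x, x ∈ Forest.leaves Γ → x ∉ Forest.leaves Γ₀ →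
      ∀ y, ¬ (graphAfter G steps).Adj x y) ∧
    (∀ i j (hi₀ : i < Γ₀.length) (hj₀ : j < Γ₀.length) (hi : i < Γ.length)
        (hj : j < Γ.length),
      (quotientGraph (graphAfter G steps) Γ₀).Adj ⟨i, hi₀⟩ ⟨j, hj₀⟩ ↔
        (quotientGraph G Γ).Adj ⟨i, hi⟩ ⟨j, hj⟩) := by
  induction h generalizing G with
  | nil Γ =>
      exact ⟨rfl, hnd, fun x hx hx' => absurd hx hx', fun i j _ _ _ _ => Iff.rfl⟩
  | @cons Γ Γ' Γ₀ u v steps hstep hrest ih =>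
      have hnd' : (Forest.leaves Γ').Nodup :=
        (List.sublist_append_left _ _).nodup (fs_nodup hstep hnd)
      obtain ⟨ihlen, ihnd, ihiso, ihquot⟩ := ih (G := mergeG G u v) hnd'
      have hga : graphAfter G ((u, v) :: steps) = graphAfter (mergeG G u v) steps := rfl
      refine ⟨ihlen.trans (fs_length hstep), ihnd, ?_, ?_⟩
      · intro x hxΓ hx₀ y
        rw [hga]
        by_cases hx' : x ∈ Forest.leaves Γ'
        · exact ihiso x hx' hx₀ y
        · refine isolated_pres hrest hx' ?_ y
          have hxv : x = v := by
            rcases List.mem_append.mp ((fs_perm hstep).mem_iff.mpr hxΓ) with hh | hh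
            · exact absurd hh hx'
            · exact List.mem_singleton.mp hh
          rintro z ⟨-, hzv, -, -⟩
          exact hzv hxv
      · intro i j hi₀ hj₀ hi hj
        have hi' : i < Γ'.length := ihlen ▸ hi₀
        have hj' : j < Γ'.length := ihlen ▸ hj₀
        rw [hga]
        exact (ihquot i j hi₀ hj₀ hi' hj').trans (step_quot hnd hstep hi hj hi' hj')

end Stmt4Aux
namespace Stmt4Aux

/-- The distinguished leaf value of the `i`-th tree. -/
noncomputable def fval (Γ : Forest V) (i : Fin Γ.length) : V :=
  (Γ.get i).leaves.head (leaves_ne_nil _)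

lemma fval_mem (Γ : Forest V) (i : Fin Γ.length) : fval Γ i ∈ (Γ.get i).leaves :=
  List.head_mem _

lemma seed_leaves_eq {Γ : Forest V} (hseed : IsSeed Γ) (i : Fin Γ.length) :
    (Γ.get i).leaves = [fval Γ i] := by
  obtain ⟨c, hc⟩ := hseed (Γ.get i) (List.get_mem _ _)
  have h1 : (Γ.get i).leaves = [c] := by rw [hc]; rfl
  have h2 := fval_mem Γ i
  rw [h1, List.mem_singleton] at h2
  rw [h1, h2]

lemma seed_bij {Γ : Forest V} (hnd : (Forest.leaves Γ).Nodup) (hseed : IsSeed Γ) :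
    Function.Bijective (fun i : Fin Γ.length =>
      (⟨fval Γ i, mem_forest_of_mem_get i.2 (fval_mem Γ ⟨i.1, i.2⟩)⟩ :
        {x // x ∈ Forest.leaves Γ})) := by
  constructor
  · intro i j hij
    have : fval Γ i = fval Γ j := congrArg Subtype.val hij
    exact Fin.ext (index_unique hnd i.2 j.2 (fval_mem Γ i) (this ▸ fval_mem Γ j))
  · rintro ⟨x, hx⟩
    obtain ⟨i, hi, hxi⟩ := exists_index_of_mem hx
    refine ⟨⟨i, hi⟩, ?_⟩
    have := seed_leaves_eq hseed ⟨i, hi⟩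
    rw [this] at hxi
    exact Subtype.ext (List.mem_singleton.mp hxi).symm

/-- For a seed forest, the induced graph on the surviving leaves is isomorphic to the
quotient graph. -/
noncomputable def seedIso {G' : SimpleGraph V} {Γ₁ : Forest V}
    (hnd : (Forest.leaves Γ₁).Nodup) (hseed : IsSeed Γ₁) :
    (G'.induce {x | x ∈ Forest.leaves Γ₁}) ≃g quotientGraph G' Γ₁ := by
  classical
  let g := fun i : Fin Γ₁.length =>
    (⟨fval Γ₁ i, mem_forest_of_mem_get i.2 (fval_mem Γ₁ ⟨i.1, i.2⟩)⟩ :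
      {x // x ∈ Forest.leaves Γ₁})
  let E := (Equiv.ofBijective g (seed_bij hnd hseed)).symm
  have hgE : ∀ a : {x // x ∈ Forest.leaves Γ₁}, g (E a) = a := fun a =>
    (Equiv.ofBijective g (seed_bij hnd hseed)).apply_symm_apply a
  have hfE : ∀ a : {x // x ∈ Forest.leaves Γ₁}, fval Γ₁ (E a) = a.1 := fun a =>
    congrArg Subtype.val (hgE a)
  refine ⟨E, ?_⟩
  intro a b
  show (quotientGraph G' Γ₁).Adj (E a) (E b) ↔ G'.Adj a.1 b.1
  constructor
  · rintro ⟨hne, x, hx, y, hy, hadj⟩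
    rw [seed_leaves_eq hseed, List.mem_singleton] at hx hy
    subst hx; subst hy
    rw [hfE a, hfE b] at hadj
    exact hadj
  · intro hadj
    have hab : a ≠ b := fun hh => hadj.ne (congrArg Subtype.val hh)
    refine ⟨fun hh => hab (E.injective hh), a.1, ?_, b.1, ?_, hadj⟩
    · rw [seed_leaves_eq hseed, hfE a]; exact List.mem_singleton.mpr rfl
    · rw [seed_leaves_eq hseed, hfE b]; exact List.mem_singleton.mpr rfl

/-- Part 1: the induced seed graph is isomorphic to `Π(G)`. -/
lemma part1 {G : SimpleGraph V} {Γ Γ₁ : Forest V} {s : List (V × V)}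
    (hnd : (Forest.leaves Γ).Nodup) (h : FUnfold Γ s Γ₁) (hseed : IsSeed Γ₁) :
    Nonempty (((graphAfter G s).induce {x | x ∈ Forest.leaves Γ₁}) ≃g quotientGraph G Γ) := by
  obtain ⟨hlen, hnd₁, -, hquot⟩ := funfold_main h hnd
  have iso1 := seedIso (G' := graphAfter G s) hnd₁ hseed
  refine ⟨iso1.trans ⟨finCongr hlen, ?_⟩⟩
  intro i j
  show (quotientGraph G Γ).Adj ⟨i.1, hlen ▸ i.2⟩ ⟨j.1, hlen ▸ j.2⟩ ↔
    (quotientGraph (graphAfter G s) Γ₁).Adj i j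
  exact (hquot i.1 j.1 i.2 j.2 _ _).symm

end Stmt4Aux
namespace Stmt4Aux

lemma part2 [Fintype V] {G : SimpleGraph V} {Γ Γ₁ Γ₂ : Forest V}
    {s₁ s₂ : List (V × V)}
    (hnd : (Forest.leaves Γ).Nodup) (hall : ∀ x : V, x ∈ Forest.leaves Γ)
    (h₁ : FUnfold Γ s₁ Γ₁) (hseed₁ : IsSeed Γ₁)
    (h₂ : FUnfold Γ s₂ Γ₂) (hseed₂ : IsSeed Γ₂) :
    Nonempty (graphAfter G s₁ ≃g graphAfter G s₂) := by
  classical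
  obtain ⟨hlen₁, hnd₁, hiso₁, -⟩ := funfold_main (G := G) h₁ hnd
  obtain ⟨hlen₂, hnd₂, hiso₂, -⟩ := funfold_main (G := G) h₂ hnd
  obtain ⟨iso₁⟩ := part1 (G := G) hnd h₁ hseed₁
  obtain ⟨iso₂⟩ := part1 (G := G) hnd h₂ hseed₂
  set G₁' := graphAfter G s₁ with hG₁
  set G₂' := graphAfter G s₂ with hG₂
  set p₁ : V → Prop := fun x => x ∈ Forest.leaves Γ₁ with hp₁
  set p₂ : V → Prop := fun x => x ∈ Forest.leaves Γ₂ with hp₂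
  let φ : {x // p₁ x} ≃ {x // p₂ x} := iso₁.toEquiv.trans iso₂.toEquiv.symm
  have hcard : Fintype.card {x // ¬p₁ x} = Fintype.card {x // ¬p₂ x} := by
    have c1 : Fintype.card {x // p₁ x} = Fintype.card {x // p₂ x} :=
      Fintype.card_congr φ
    rw [Fintype.card_subtype_compl, Fintype.card_subtype_compl, c1]
  let ψ : {x // ¬p₁ x} ≃ {x // ¬p₂ x} := Fintype.equivOfCardEq hcard
  let e : V ≃ V := Equiv.subtypeCongr φ ψ
  have key₁ : ∀ (x : V) (h : p₁ x), e x = ↑(φ ⟨x, h⟩) := by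
    intro x h
    simp [e, Equiv.subtypeCongr, Equiv.sumCompl_symm_apply_of_pos h]
  have key₂ : ∀ (x : V) (h : ¬p₁ x), e x = ↑(ψ ⟨x, h⟩) := by
    intro x h
    simp [e, Equiv.subtypeCongr, Equiv.sumCompl_symm_apply_of_neg h]
  have adjφ : ∀ (x y : {x // p₁ x}), G₂'.Adj ↑(φ x) ↑(φ y) ↔ G₁'.Adj ↑x ↑y := by
    intro x y
    have h2 : G₂'.Adj ↑(φ x) ↑(φ y) ↔
        (quotientGraph G Γ).Adj (iso₂ (φ x)) (iso₂ (φ y)) := iso₂.map_rel_iff.symm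
    have h1 : (quotientGraph G Γ).Adj (iso₁ x) (iso₁ y) ↔ G₁'.Adj ↑x ↑y :=
      iso₁.map_rel_iff
    have e2 : iso₂ (φ x) = iso₁ x := iso₂.toEquiv.apply_symm_apply (iso₁.toEquiv x)
    have e2' : iso₂ (φ y) = iso₁ y := iso₂.toEquiv.apply_symm_apply (iso₁.toEquiv y)
    rw [h2, e2, e2', h1]
  refine ⟨⟨e, ?_⟩⟩
  intro a b
  show G₂'.Adj (e a) (e b) ↔ G₁'.Adj a b
  by_cases ha : p₁ a
  · by_cases hb : p₁ b
    · rw [key₁ a ha, key₁ b hb]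
      exact adjφ ⟨a, ha⟩ ⟨b, hb⟩
    · refine iff_of_false ?_ (fun hadj => hiso₁ b (hall b) hb a hadj.symm)
      rw [key₂ b hb]
      exact fun hadj => hiso₂ _ (hall _) (ψ ⟨b, hb⟩).2 _ hadj.symm
  · refine iff_of_false ?_ (fun hadj => hiso₁ a (hall a) ha b hadj)
    rw [key₂ a ha]
    exact fun hadj => hiso₂ _ (hall _) (ψ ⟨a, ha⟩).2 _ hadj

end Stmt4Aux

/-- seed-graph lemma: for any duplicate sequence compatible with the
duplication forest `Γ` of `G`, the seed graph (restricted to its surviving vertices,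
the leaves of the fully reduced forest) is isomorphic to the quotient graph Π(G);
consequently the seed graphs of any two compatible duplicate sequences are isomorphic. -/
theorem stmt4 [Fintype V] (G : SimpleGraph V) (Γ : Forest V)
    (hnd : (Forest.leaves Γ).Nodup) (hall : ∀ x : V, x ∈ Forest.leaves Γ)
    (s₁ s₂ : List (V × V)) (Γ₁ Γ₂ : Forest V)
    (h₁ : FUnfold Γ s₁ Γ₁) (hseed₁ : IsSeed Γ₁)
    (h₂ : FUnfold Γ s₂ Γ₂) (hseed₂ : IsSeed Γ₂) :
    Nonempty (((graphAfter G s₁).induce {x | x ∈ Forest.leaves Γ₁}) ≃g quotientGraph G Γ) ∧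
      Nonempty (graphAfter G s₁ ≃g graphAfter G s₂) := by
  exact ⟨Stmt4Aux.part1 hnd h₁ hseed₁, Stmt4Aux.part2 hnd hall h₁ hseed₁ h₂ hseed₂⟩
end

section
/- The quotient graph is invariant under a merge step: if G is a finite simple graph, Γ a duplication forest for G with trees T₁,…,T_k, and u, v are leaves of the same tree T_i forming a cherry, then Π(R_v^u(G)) = Π(G), where Π(G) is the graph on {1,…,k} with i ~ j (i ≠ j) iff some leaf of T_i is adjacent in G to some leaf of T_j. -/
open scoped Classical

universe u

variable {V : Type u}

section Aux

private lemma rc_v {t t' : BTree V} {u v : V} (h : ReplaceCherry t u v t') : v ∈ t.leaves := by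
  induction h <;> simp [BTree.leaves, *]

private lemma rc_u {t t' : BTree V} {u v : V} (h : ReplaceCherry t u v t') : u ∈ t.leaves := by
  induction h <;> simp [BTree.leaves, *]

private lemma rc_u' {t t' : BTree V} {u v : V} (h : ReplaceCherry t u v t') : u ∈ t'.leaves := by
  induction h <;> simp [BTree.leaves, *]

private lemma rc_mem {t t' : BTree V} {u v : V} (h : ReplaceCherry t u v t')
    (hnd : t.leaves.Nodup) : ∀ x, x ∈ t'.leaves ↔ x ∈ t.leaves ∧ x ≠ v := by
  induction h with
  | base_left u v =>
      simp [BTree.leaves] at hnd ⊢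
      aesop
  | base_right u v =>
      simp [BTree.leaves] at hnd ⊢
      aesop
  | @left l l' r u v h ih =>
      simp [BTree.leaves, List.nodup_append] at hnd
      intro x
      have hv : v ∉ r.leaves := fun hx => hnd.2.2 v (rc_v h) v hx rfl
      simp [BTree.leaves, ih hnd.1]
      aesop
  | @right l r r' u v h ih =>
      simp [BTree.leaves, List.nodup_append] at hnd
      intro x
      have hv : v ∉ l.leaves := fun hx => hnd.2.2 v hx v (rc_v h) rfl
      simp [BTree.leaves, ih hnd.2.1]
      aesop

private lemma fs_decomp {G : Forest V} {G' : Forest V} {u v : V} (h : ForestStep G u v G') :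
    ∃ pre t t' post, G = pre ++ t :: post ∧ G' = pre ++ t' :: post ∧ ReplaceCherry t u v t' := by
  induction h with
  | head hrc => exact ⟨[], _, _, _, rfl, rfl, hrc⟩
  | @tail s ts ts' u v _ ih =>
      obtain ⟨pre, t, t'', post, h1, h2, h3⟩ := ih
      exact ⟨s :: pre, t, t'', post, by simp [h1], by simp [h2], h3⟩

private lemma mid_getElem {α : Type*} (pre post : List α) (t : α) :
    (pre ++ t :: post)[pre.length]'(by simp) = t := by
  rw [List.getElem_append_right (le_refl _)]
  simp

private lemma side_getElem {α : Type*} (pre post : List α) (t s : α) (n : ℕ)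
    (h1 : n < (pre ++ t :: post).length) (hn : n ≠ pre.length) :
    (pre ++ t :: post)[n] =
      (pre ++ s :: post)[n]'(by simp only [List.length_append, List.length_cons] at h1 ⊢; omega) ∧
    ((pre ++ t :: post)[n] ∈ pre ∨ (pre ++ t :: post)[n] ∈ post) := by
  rcases lt_or_gt_of_ne hn with h | h
  · rw [List.getElem_append_left h, List.getElem_append_left h]
    exact ⟨rfl, Or.inl (List.getElem_mem _)⟩
  · obtain ⟨m, rfl⟩ : ∃ m, n = pre.length + 1 + m := ⟨n - pre.length - 1, by omega⟩
    rw [List.getElem_append_right (by omega), List.getElem_append_right (by omega)]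
    have e : pre.length + 1 + m - pre.length = m + 1 := by omega
    constructor
    · simp only [e, List.getElem_cons_succ]
    · simp only [e, List.getElem_cons_succ]
      exact Or.inr (List.getElem_mem _)

end Aux

/-- the quotient graph is invariant under a merge step: if `u, v` are
leaves forming a cherry of one tree of `Γ` and `Γ'` is the forest obtained by replacing
this cherry with the leaf `u`, then `Π(R_v^u(G)) = Π(G)` (up to the canonical
identification of the index sets, which have equal length). -/
theorem stmt5 [Fintype V] (G : SimpleGraph V) (Γ Γ' : Forest V) (u v : V)
    (hnd : (Forest.leaves Γ).Nodup) (hall : ∀ x : V, x ∈ Forest.leaves Γ)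
    (hstep : ForestStep Γ u v Γ') (hlen : Γ'.length = Γ.length) :
    quotientGraph (mergeG G u v) Γ' = (quotientGraph G Γ).comap (Fin.cast hlen) := by
  obtain ⟨pre, t, t', post, hG, hG', hrc⟩ := fs_decomp hstep
  subst hG hG'
  simp only [Forest.leaves, List.flatMap_append, List.flatMap_cons, List.nodup_append] at hnd
  have hndt : t.leaves.Nodup := hnd.2.1.1
  have hdisj : ∀ x ∈ t.leaves, ∀ s, (s ∈ pre ∨ s ∈ post) → x ∉ s.leaves := by
    intro x hx s hs hxs
    rcases hs with hs | hs
    · exact hnd.2.2 x (List.mem_flatMap.2 ⟨s, hs, hxs⟩) x (List.mem_append_left _ hx) rfl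
    · exact hnd.2.1.2.2 x hx x (List.mem_flatMap.2 ⟨s, hs, hxs⟩) rfl
  have huv : u ≠ v := ((rc_mem hrc hndt u).1 (rc_u' hrc)).2
  have hget : ∀ k : Fin (pre ++ t' :: post).length,
      ((pre ++ t' :: post).get k = t' ∧ (pre ++ t :: post).get (Fin.cast hlen k) = t ∧
        (k : ℕ) = pre.length)
      ∨ ((pre ++ t' :: post).get k = (pre ++ t :: post).get (Fin.cast hlen k) ∧
        ((pre ++ t' :: post).get k ∈ pre ∨ (pre ++ t' :: post).get k ∈ post)) := by
    intro k
    by_cases hk : (k : ℕ) = pre.length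
    · left
      have key : ∀ (a : BTree V) (l : List (BTree V)) (n : ℕ) (h : n < (pre ++ a :: l).length),
          n = pre.length → (pre ++ a :: l)[n] = a := by
        rintro a l n h rfl
        exact mid_getElem pre l a
      exact ⟨key t' post _ _ hk, key t post _ _ hk, hk⟩
    · right
      have := side_getElem pre post t' t (k : ℕ) k.isLt hk
      simpa only [List.get_eq_getElem, Fin.coe_cast] using this
  have memL : ∀ (k : Fin (pre ++ t' :: post).length) x,
      x ∈ ((pre ++ t' :: post).get k).leaves ↔
        x ∈ ((pre ++ t :: post).get (Fin.cast hlen k)).leaves ∧ x ≠ v := by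
    intro k x
    rcases hget k with ⟨e1, e2, _⟩ | ⟨e1, hs⟩
    · rw [e1, e2]; exact rc_mem hrc hndt x
    · rw [← e1]
      constructor
      · intro hx
        refine ⟨hx, fun hxv => ?_⟩
        rw [hxv] at hx
        exact hdisj v (rc_v hrc) _ hs hx
      · exact And.left
  have hsame : ∀ k : Fin (pre ++ t' :: post).length,
      u ∈ ((pre ++ t :: post).get (Fin.cast hlen k)).leaves →
      v ∈ ((pre ++ t :: post).get (Fin.cast hlen k)).leaves := by
    intro k hu
    rcases hget k with ⟨_, e2, _⟩ | ⟨e1, hs⟩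
    · rw [e2]; exact rc_v hrc
    · rw [← e1] at hu; exact absurd hu (hdisj u (rc_u hrc) _ hs)
  have hvk : ∀ k : Fin (pre ++ t' :: post).length,
      v ∈ ((pre ++ t :: post).get (Fin.cast hlen k)).leaves →
      ((pre ++ t' :: post).get k = t' ∧ (k : ℕ) = pre.length) := by
    intro k hv
    rcases hget k with ⟨e1, _, h3⟩ | ⟨e1, hs⟩
    · exact ⟨e1, h3⟩
    · rw [← e1] at hv; exact absurd hv (hdisj v (rc_v hrc) _ hs)
  have hside : ∀ k : Fin (pre ++ t' :: post).length, (k : ℕ) ≠ pre.length →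
      ∀ x ∈ t.leaves, x ∉ ((pre ++ t :: post).get (Fin.cast hlen k)).leaves := by
    intro k hk x hx
    rcases hget k with ⟨_, _, h3⟩ | ⟨e1, hs⟩
    · exact absurd h3 hk
    · rw [← e1]; exact hdisj x hx _ hs
  ext i j
  show ((quotientGraph (mergeG G u v) _).Adj i j) ↔
    ((quotientGraph G _).Adj (Fin.cast hlen i) (Fin.cast hlen j))
  constructor
  · rintro ⟨hij, x, hx, y, hy, hne, hxv, hyv, hcase⟩
    have hij' : Fin.cast hlen i ≠ Fin.cast hlen j := fun h => hij (by simpa [Fin.ext_iff] using congrArg Fin.val h)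
    have hx' := ((memL i x).1 hx).1
    have hy' := ((memL j y).1 hy).1
    refine ⟨hij', ?_⟩
    rcases hcase with h | ⟨rfl, h⟩ | ⟨rfl, h⟩
    · exact ⟨x, hx', y, hy', h⟩
    · exact ⟨v, hsame i hx', y, hy', h⟩
    · exact ⟨x, hx', v, hsame j hy', h.symm⟩
  · rintro ⟨hij', x, hx, y, hy, hxy⟩
    have hij : i ≠ j := fun h => hij' (by rw [h])
    refine ⟨hij, ?_⟩
    by_cases hxv : x = v
    · rw [hxv] at hx hxy
      obtain ⟨e1, hival⟩ := hvk i hx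
      have hjval : (j : ℕ) ≠ pre.length := by
        intro h
        exact hij (Fin.ext (hival.trans h.symm))
      have hvy : y ≠ v := by
        intro h
        rw [h] at hy
        exact hside j hjval v (rc_v hrc) hy
      have huy : u ≠ y := by
        intro h
        rw [← h] at hy
        exact hside j hjval u (rc_u hrc) hy
      refine ⟨u, ?_, y, (memL j y).2 ⟨hy, hvy⟩, huy, huv, hvy, Or.inr (Or.inl ⟨rfl, hxy⟩)⟩
      rw [e1]; exact rc_u' hrc
    · by_cases hyv : y = v
      · rw [hyv] at hy hxy
        obtain ⟨e1, hjval⟩ := hvk j hy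
        have hival : (i : ℕ) ≠ pre.length := by
          intro h
          exact hij (Fin.ext (h.trans hjval.symm))
        have hxu : x ≠ u := by
          intro h
          rw [h] at hx
          exact hside i hival u (rc_u hrc) hx
        refine ⟨x, (memL i x).2 ⟨hx, hxv⟩, u, ?_, hxu.symm ∘ Eq.symm, hxv, huv,
          Or.inr (Or.inr ⟨rfl, hxy.symm⟩)⟩
        rw [e1]; exact rc_u' hrc
      · exact ⟨x, (memL i x).2 ⟨hx, hxv⟩, y, (memL j y).2 ⟨hy, hyv⟩,
          hxy.ne, hxv, hyv, Or.inl hxy⟩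
end

section
/- Given a network G with duplication forest Γ, the extension number e(θ) = Σ_i e(v_i) is the same for every duplicate sequence θ compatible with Γ, where e(v_i) is the number of common neighbors of v_i and its anchor u_i in G_i^θ. -/
open scoped Classical

universe u

variable {V : Type u}

namespace DFAux

/-! ### Counting helpers -/

noncomputable def chi (P : Prop) : ℕ := if P then 1 else 0

lemma chi_congr {P Q : Prop} (h : P ↔ Q) : chi P = chi Q := by simp [chi, h]

noncomputable def cnt {α : Type*} (P : α → Prop) : List α → ℕ
  | [] => 0
  | a :: l => chi (P a) + cnt P l

lemma cnt_congr {α : Type*} {P Q : α → Prop} {l : List α} (h : ∀ x ∈ l, P x ↔ Q x) :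
    cnt P l = cnt Q l := by
  induction l with
  | nil => rfl
  | cons a l ih =>
    simp only [cnt]
    rw [chi_congr (h a (by simp)), ih (fun x hx => h x (by simp [hx]))]

lemma cnt_perm {α : Type*} (P : α → Prop) {l l' : List α} (h : l.Perm l') :
    cnt P l = cnt P l' := by
  induction h with
  | nil => rfl
  | cons a _ ih => simp [cnt, ih]
  | swap a b l => simp only [cnt]; omega
  | trans _ _ ih1 ih2 => omega

lemma cnt_add_cnt {α : Type*} (P Q : α → Prop) (l : List α) :
    cnt P l + cnt Q l = cnt (fun x => P x ∨ Q x) l + cnt (fun x => P x ∧ Q x) l := by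
  induction l with
  | nil => rfl
  | cons a l ih =>
    simp only [cnt]
    have : chi (P a) + chi (Q a) = chi (P a ∨ Q a) + chi (P a ∧ Q a) := by
      by_cases hP : P a <;> by_cases hQ : Q a <;> simp [chi, hP, hQ]
    omega

lemma cnt_forall₂ {α β : Type*} {R : α → β → Prop} {l : List α} {l' : List β}
    (h : List.Forall₂ R l l') {P : α → Prop} {Q : β → Prop}
    (hPQ : ∀ a b, R a b → (P a ↔ Q b)) : cnt P l = cnt Q l' := by
  induction h with
  | nil => rfl
  | cons hab _ ih => simp only [cnt]; rw [chi_congr (hPQ _ _ hab), ih]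

lemma cnt_card [Fintype V] {l : List V} (hl : l.Nodup) (P : V → Prop) [DecidablePred P] :
    (l.toFinset.filter P).card = cnt P l := by
  induction l with
  | nil => simp [cnt]
  | cons a l ih =>
    rw [List.nodup_cons] at hl
    rw [List.toFinset_cons, Finset.filter_insert]
    by_cases hP : P a
    · rw [if_pos hP, Finset.card_insert_of_notMem (by simp [hl.1])]
      simp [cnt, chi, hP, ih hl.2]; omega
    · rw [if_neg hP]
      simp [cnt, chi, hP, ih hl.2]

/-! ### Cross edges between classes -/

def cross (G : SimpleGraph V) (A B : Finset V) : Prop := ∃ a ∈ A, ∃ b ∈ B, G.Adj a b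

lemma cross_symm {G : SimpleGraph V} {A B : Finset V} : cross G A B ↔ cross G B A := by
  constructor <;> rintro ⟨a, ha, b, hb, hab⟩ <;> exact ⟨b, hb, a, ha, hab.symm⟩

lemma cross_union_left {G : SimpleGraph V} {A B C : Finset V} :
    cross G (A ∪ B) C ↔ cross G A C ∨ cross G B C := by
  constructor
  · rintro ⟨a, ha, b, hb, hab⟩
    rcases Finset.mem_union.mp ha with h | h
    · exact Or.inl ⟨a, h, b, hb, hab⟩
    · exact Or.inr ⟨a, h, b, hb, hab⟩
  · rintro (⟨a, ha, b, hb, hab⟩ | ⟨a, ha, b, hb, hab⟩)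
    · exact ⟨a, Finset.mem_union_left _ ha, b, hb, hab⟩
    · exact ⟨a, Finset.mem_union_right _ ha, b, hb, hab⟩

lemma cross_mono {G : SimpleGraph V} {A A' B B' : Finset V} (hA : A ⊆ A') (hB : B ⊆ B') :
    cross G A B → cross G A' B' := by
  rintro ⟨a, ha, b, hb, hab⟩; exact ⟨a, hA ha, b, hB hb, hab⟩

lemma cross_singleton {G : SimpleGraph V} {x y : V} : cross G {x} {y} ↔ G.Adj x y := by
  simp [cross]

/-! ### The pair-count `EL` of a list of classes -/

noncomputable def EL (G : SimpleGraph V) (c : V → Finset V) : List V → ℕ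
  | [] => 0
  | a :: l => cnt (fun b => cross G (c a) (c b)) l + EL G c l

lemma EL_perm (G : SimpleGraph V) (c : V → Finset V) {l l' : List V} (h : l.Perm l') :
    EL G c l = EL G c l' := by
  induction h with
  | nil => rfl
  | cons a h ih => simp only [EL]; rw [ih, cnt_perm _ h]
  | swap a b l =>
    simp only [EL, cnt]
    rw [chi_congr (cross_symm (G := G) (A := c b) (B := c a))]
    omega
  | trans _ _ ih1 ih2 => omega

lemma EL_congr {G : SimpleGraph V} {c c' : V → Finset V} {l : List V}
    (h : ∀ x ∈ l, c' x = c x) : EL G c' l = EL G c l := by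
  induction l with
  | nil => rfl
  | cons a l ih =>
    simp only [EL]
    rw [ih (fun x hx => h x (by simp [hx])),
      cnt_congr (fun x hx => by rw [h a (by simp), h x (by simp [hx])])]

/-! ### Classes attached to trees and the invariant quantity `Kf` -/

noncomputable def Cls (c : V → Finset V) : BTree V → Finset V
  | .leaf v => c v
  | .node l r => Cls c l ∪ Cls c r

lemma Cls_congr {c c' : V → Finset V} {t : BTree V} (h : ∀ x ∈ t.leaves, c' x = c x) :
    Cls c' t = Cls c t := by
  induction t with
  | leaf v => exact h v (by simp [BTree.leaves])
  | node l r ihl ihr =>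
    simp only [BTree.leaves, List.mem_append] at h
    simp only [Cls]
    rw [ihl (fun x hx => h x (Or.inl hx)), ihr (fun x hx => h x (Or.inr hx))]

noncomputable def Dtree (G : SimpleGraph V) (c : V → Finset V) : BTree V → ℕ
  | .leaf _ => 0
  | .node l r => DFAux.chi (cross G (Cls c l) (Cls c r)) + Dtree G c l + Dtree G c r

lemma Dtree_congr {G : SimpleGraph V} {c c' : V → Finset V} {t : BTree V}
    (h : ∀ x ∈ t.leaves, c' x = c x) : Dtree G c' t = Dtree G c t := by
  induction t with
  | leaf v => rfl
  | node l r ihl ihr =>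
    simp only [BTree.leaves, List.mem_append] at h
    simp only [Dtree]
    rw [ihl (fun x hx => h x (Or.inl hx)), ihr (fun x hx => h x (Or.inr hx)),
      Cls_congr (fun x hx => h x (Or.inl hx)), Cls_congr (fun x hx => h x (Or.inr hx))]

noncomputable def Kf (G : SimpleGraph V) (c : V → Finset V) : Forest V → ℕ
  | [] => 0
  | t :: ts => Dtree G c t + DFAux.cnt (fun s => cross G (Cls c t) (Cls c s)) ts + Kf G c ts

lemma Forest.leaves_cons (t : BTree V) (ts : Forest V) :
    Forest.leaves (t :: ts) = t.leaves ++ Forest.leaves ts := by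
  simp [Forest.leaves]

lemma Kf_congr {G : SimpleGraph V} {c c' : V → Finset V} {ts : Forest V}
    (h : ∀ x ∈ Forest.leaves ts, c' x = c x) : Kf G c' ts = Kf G c ts := by
  induction ts with
  | nil => rfl
  | cons t ts ih =>
    rw [Forest.leaves_cons] at h
    simp only [List.mem_append] at h
    have ht : ∀ x ∈ t.leaves, c' x = c x := fun x hx => h x (Or.inl hx)
    have hts : ∀ x ∈ Forest.leaves ts, c' x = c x := fun x hx => h x (Or.inr hx)
    have hcls : ∀ s ∈ ts, Cls c' s = Cls c s := by
      intro s hs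
      refine Cls_congr (fun x hx => hts x ?_)
      simp only [Forest.leaves, List.mem_flatMap]
      exact ⟨s, hs, hx⟩
    simp only [Kf]
    rw [Dtree_congr ht, ih hts,
      cnt_congr (fun s hs => by rw [Cls_congr ht, hcls s hs])]

/-! ### Structure of `ReplaceCherry` and `ForestStep` -/

lemma RC_leaves {t t' : BTree V} {u v : V} (h : ReplaceCherry t u v t') :
    ∃ p q : List V, (t.leaves = p ++ u :: v :: q ∨ t.leaves = p ++ v :: u :: q) ∧
      t'.leaves = p ++ u :: q := by
  induction h with
  | base_left u v => exact ⟨[], [], Or.inl rfl, rfl⟩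
  | base_right u v => exact ⟨[], [], Or.inr rfl, rfl⟩
  | @left l l' r u v _ ih =>
    obtain ⟨p, q, h1, h2⟩ := ih
    refine ⟨p, q ++ r.leaves, ?_, by simp [BTree.leaves, h2]⟩
    rcases h1 with h1 | h1
    · exact Or.inl (by simp [BTree.leaves, h1])
    · exact Or.inr (by simp [BTree.leaves, h1])
  | @right l r r' u v _ ih =>
    obtain ⟨p, q, h1, h2⟩ := ih
    refine ⟨l.leaves ++ p, q, ?_, by simp [BTree.leaves, h2]⟩
    rcases h1 with h1 | h1
    · exact Or.inl (by simp [BTree.leaves, h1])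
    · exact Or.inr (by simp [BTree.leaves, h1])

lemma RC_mem {t t' : BTree V} {u v : V} (h : ReplaceCherry t u v t') :
    u ∈ t.leaves ∧ v ∈ t.leaves := by
  obtain ⟨p, q, h1, _⟩ := RC_leaves h
  rcases h1 with h1 | h1 <;> rw [h1] <;> simp

lemma RC_Cls_Dtree {G : SimpleGraph V} {t t' : BTree V} {u v : V}
    (h : ReplaceCherry t u v t') (hnd : t.leaves.Nodup) (c : V → Finset V) :
    Cls (Function.update c u (c u ∪ c v)) t' = Cls c t ∧
      Dtree G c t = DFAux.chi (cross G (c u) (c v)) +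
        Dtree G (Function.update c u (c u ∪ c v)) t' := by
  induction h with
  | base_left u v =>
    constructor
    · show Function.update c u (c u ∪ c v) u = Cls c (.node (.leaf u) (.leaf v))
      simp [Cls, Function.update_self]
    · simp [Dtree, Cls]
  | base_right u v =>
    constructor
    · show Function.update c u (c u ∪ c v) u = Cls c (.node (.leaf v) (.leaf u))
      simp [Cls, Function.update_self, Finset.union_comm]
    · simp only [Dtree, Cls]
      rw [DFAux.chi_congr (cross_symm (G := G))]
  | @left l l' r u v hrc ih =>
    simp only [BTree.leaves, List.nodup_append] at hnd
    obtain ⟨hndl, hndr, hdisj⟩ := hnd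
    have hur : ∀ x ∈ r.leaves, Function.update c u (c u ∪ c v) x = c x := by
      intro x hx
      have hxu : x ≠ u := fun he => hdisj _ (RC_mem hrc).1 _ hx he.symm
      simp [Function.update_of_ne hxu]
    obtain ⟨ih1, ih2⟩ := ih hndl
    constructor
    · simp only [Cls]; rw [ih1, Cls_congr hur]
    · simp only [Dtree]
      rw [ih1, Cls_congr hur, Dtree_congr hur]
      omega
  | @right l r r' u v hrc ih =>
    simp only [BTree.leaves, List.nodup_append] at hnd
    obtain ⟨hndl, hndr, hdisj⟩ := hnd
    have hul : ∀ x ∈ l.leaves, Function.update c u (c u ∪ c v) x = c x := by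
      intro x hx
      have hxu : x ≠ u := fun he => hdisj _ hx _ (RC_mem hrc).1 he
      simp [Function.update_of_ne hxu]
    obtain ⟨ih1, ih2⟩ := ih hndr
    constructor
    · simp only [Cls]; rw [ih1, Cls_congr hul]
    · simp only [Dtree]
      rw [ih1, Cls_congr hul, Dtree_congr hul]
      omega

lemma FS_leaves {Γ' Γ'' : Forest V} {u v : V} (h : ForestStep Γ' u v Γ'') :
    ∃ p q : List V,
      (Forest.leaves Γ' = p ++ u :: v :: q ∨ Forest.leaves Γ' = p ++ v :: u :: q) ∧
      Forest.leaves Γ'' = p ++ u :: q := by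
  induction h with
  | @head t t' ts u v hrc =>
    obtain ⟨p, q, h1, h2⟩ := RC_leaves hrc
    refine ⟨p, q ++ Forest.leaves ts, ?_, by simp [Forest.leaves_cons, h2]⟩
    rcases h1 with h1 | h1
    · exact Or.inl (by simp [Forest.leaves_cons, h1])
    · exact Or.inr (by simp [Forest.leaves_cons, h1])
  | @tail t ts ts' u v _ ih =>
    obtain ⟨p, q, h1, h2⟩ := ih
    refine ⟨t.leaves ++ p, q, ?_, by simp [Forest.leaves_cons, h2]⟩
    rcases h1 with h1 | h1
    · exact Or.inl (by simp [Forest.leaves_cons, h1])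
    · exact Or.inr (by simp [Forest.leaves_cons, h1])

lemma FS_mem {Γ' Γ'' : Forest V} {u v : V} (h : ForestStep Γ' u v Γ'') :
    u ∈ Forest.leaves Γ' ∧ v ∈ Forest.leaves Γ' := by
  obtain ⟨p, q, h1, _⟩ := FS_leaves h
  rcases h1 with h1 | h1 <;> rw [h1] <;> simp

lemma FS_Kf (G : SimpleGraph V) {Γ' Γ'' : Forest V} {u v : V}
    (h : ForestStep Γ' u v Γ'') (hnd : (Forest.leaves Γ').Nodup) (c : V → Finset V) :
    List.Forall₂ (fun s s' => Cls (Function.update c u (c u ∪ c v)) s' = Cls c s) Γ' Γ'' ∧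
      Kf G c Γ' = DFAux.chi (cross G (c u) (c v)) +
        Kf G (Function.update c u (c u ∪ c v)) Γ'' := by
  induction h with
  | @head t t' ts u v hrc =>
    rw [Forest.leaves_cons, List.nodup_append] at hnd
    obtain ⟨hndt, hndts, hdisj⟩ := hnd
    have hagree : ∀ x ∈ Forest.leaves ts, Function.update c u (c u ∪ c v) x = c x := by
      intro x hx
      have hxu : x ≠ u := fun he => hdisj _ (RC_mem hrc).1 _ hx he.symm
      simp [Function.update_of_ne hxu]
    have hclsts : ∀ s ∈ ts, Cls (Function.update c u (c u ∪ c v)) s = Cls c s := by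
      intro s hs
      refine Cls_congr (fun x hx => hagree x ?_)
      simp only [Forest.leaves, List.mem_flatMap]
      exact ⟨s, hs, hx⟩
    obtain ⟨h1, h2⟩ := RC_Cls_Dtree (G := G) hrc hndt c
    constructor
    · exact List.Forall₂.cons h1 (List.forall₂_same.mpr hclsts)
    · have hcnt : DFAux.cnt
          (fun s => cross G (Cls (Function.update c u (c u ∪ c v)) t')
            (Cls (Function.update c u (c u ∪ c v)) s)) ts =
          DFAux.cnt (fun s => cross G (Cls c t) (Cls c s)) ts :=
        cnt_congr (fun s hs => by rw [h1, hclsts s hs])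
      simp only [Kf]
      rw [hcnt, Kf_congr hagree]
      omega
  | @tail t ts ts' u v hstep ih =>
    rw [Forest.leaves_cons, List.nodup_append] at hnd
    obtain ⟨hndt, hndts, hdisj⟩ := hnd
    have hut : ∀ x ∈ t.leaves, Function.update c u (c u ∪ c v) x = c x := by
      intro x hx
      have hxu : x ≠ u := fun he => hdisj _ hx _ (FS_mem hstep).1 he
      simp [Function.update_of_ne hxu]
    obtain ⟨ih1, ih2⟩ := ih hndts
    constructor
    · exact List.Forall₂.cons (Cls_congr hut) ih1
    · have hcnt : DFAux.cnt
          (fun s' => cross G (Cls (Function.update c u (c u ∪ c v)) t)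
            (Cls (Function.update c u (c u ∪ c v)) s')) ts' =
          DFAux.cnt (fun s => cross G (Cls c t) (Cls c s)) ts :=
        DFAux.cnt_forall₂ (List.Forall₂.flip ih1)
          (fun s' s hs => by rw [Cls_congr hut, hs])
      simp only [Kf]
      rw [hcnt, Dtree_congr hut]
      omega

/-! ### Seed forests -/

lemma seed_cnt {G : SimpleGraph V} {c : V → Finset V} {ts : Forest V} (hs : IsSeed ts)
    (A : Finset V) :
    DFAux.cnt (fun s => cross G A (Cls c s)) ts =
      DFAux.cnt (fun ℓ => cross G A (c ℓ)) (Forest.leaves ts) := by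
  induction ts with
  | nil => rfl
  | cons t ts ih =>
    obtain ⟨w, rfl⟩ := hs t (by simp)
    have hts : IsSeed ts := fun s hsm => hs s (by simp [hsm])
    rw [Forest.leaves_cons]
    simp only [BTree.leaves, List.cons_append, List.nil_append, DFAux.cnt, Cls]
    rw [ih hts]

lemma seed_Kf (G : SimpleGraph V) (c : V → Finset V) {Γ₀ : Forest V} (hs : IsSeed Γ₀) :
    Kf G c Γ₀ = DFAux.EL G c (Forest.leaves Γ₀) := by
  induction Γ₀ with
  | nil => rfl
  | cons t ts ih =>
    obtain ⟨w, rfl⟩ := hs t (by simp)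
    have hts : IsSeed ts := fun s hsm => hs s (by simp [hsm])
    rw [Forest.leaves_cons]
    simp only [BTree.leaves, List.cons_append, List.nil_append, Kf, Dtree, DFAux.EL, Cls]
    rw [ih hts, seed_cnt hts]
    simp

/-! ### Facts about a cherry inside a nodup leaf list -/

lemma nodup_parts {p q : List V} {u v : V} (h : (p ++ u :: v :: q).Nodup) :
    p.Nodup ∧ q.Nodup ∧ u ∉ p ∧ v ∉ p ∧ u ∉ q ∧ v ∉ q ∧ u ≠ v := by
  rw [List.nodup_append] at h
  obtain ⟨hp, hc, hd⟩ := h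
  simp only [List.nodup_cons, List.mem_cons] at hc
  obtain ⟨hu, hv, hq⟩ := hc
  push_neg at hu
  refine ⟨hp, hq, fun hm => hd _ hm _ (by simp) rfl, fun hm => hd _ hm _ (by simp) rfl, hu.2, hv, hu.1⟩

lemma cherry_facts {p q L : List V} {u v : V}
    (hL : L = p ++ u :: v :: q ∨ L = p ++ v :: u :: q) (hnd : L.Nodup) :
    u ∈ L ∧ v ∈ L ∧ u ≠ v ∧ u ∉ p ++ q ∧ v ∉ p ++ q ∧ (p ++ u :: q).Nodup ∧
      (∀ x, x ∈ p ++ u :: q ↔ x ∈ L ∧ x ≠ v) ∧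
      (∀ x, x ∈ p ++ q ↔ x ∈ L ∧ x ≠ u ∧ x ≠ v) := by
  have key : p.Nodup ∧ q.Nodup ∧ u ∉ p ∧ v ∉ p ∧ u ∉ q ∧ v ∉ q ∧ u ≠ v ∧
      (∀ x, x ∈ L ↔ x ∈ p ∨ x = u ∨ x = v ∨ x ∈ q) := by
    rcases hL with rfl | rfl
    · obtain ⟨hp, hq, hup, hvp, huq, hvq, huv⟩ := nodup_parts hnd
      exact ⟨hp, hq, hup, hvp, huq, hvq, huv,
        fun x => by simp only [List.mem_append, List.mem_cons]⟩
    · obtain ⟨hp, hq, hvp, hup, hvq, huq, hvu⟩ := nodup_parts hnd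
      exact ⟨hp, hq, hup, hvp, huq, hvq, hvu.symm,
        fun x => by simp only [List.mem_append, List.mem_cons]; tauto⟩
  obtain ⟨hp, hq, hup, hvp, huq, hvq, huv, hmemL⟩ := key
  refine ⟨(hmemL u).mpr (by tauto), (hmemL v).mpr (by tauto), huv,
    by simp [hup, huq], by simp [hvp, hvq], ?_, ?_, ?_⟩
  · rw [List.nodup_append]
    refine ⟨hp, by simp [hq, huq], ?_⟩
    intro a hap b ha hab
    subst hab
    simp only [List.mem_cons] at ha
    rcases ha with rfl | ha
    · exact hup hap
    · rcases hL with rfl | rfl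
      · rw [List.nodup_append] at hnd
        exact hnd.2.2 _ hap _ (by simp [ha]) rfl
      · rw [List.nodup_append] at hnd
        exact hnd.2.2 _ hap _ (by simp [ha]) rfl
  · intro x
    simp only [List.mem_append, List.mem_cons]
    rw [hmemL x]
    constructor
    · rintro (hx | rfl | hx)
      · exact ⟨Or.inl hx, fun he => hvp (he ▸ hx)⟩
      · exact ⟨Or.inr (Or.inl rfl), huv⟩
      · exact ⟨by tauto, fun he => hvq (he ▸ hx)⟩
    · rintro ⟨hx | rfl | rfl | hx, hxv⟩
      · exact Or.inl hx
      · exact Or.inr (Or.inl rfl)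
      · exact absurd rfl hxv
      · exact Or.inr (Or.inr hx)
  · intro x
    simp only [List.mem_append]
    rw [hmemL x]
    constructor
    · rintro (hx | hx)
      · exact ⟨Or.inl hx, fun he => hup (he ▸ hx), fun he => hvp (he ▸ hx)⟩
      · exact ⟨by tauto, fun he => huq (he ▸ hx), fun he => hvq (he ▸ hx)⟩
    · rintro ⟨hx | rfl | rfl | hx, hxu, hxv⟩
      · exact Or.inl hx
      · exact absurd rfl hxu
      · exact absurd rfl hxv
      · exact Or.inr hx

/-! ### The key one-step identity for `EL` -/

lemma EL_cherry (G : SimpleGraph V) (c : V → Finset V) {u v : V} {p q L : List V}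
    (hL : L = p ++ u :: v :: q ∨ L = p ++ v :: u :: q)
    (hu : u ∉ p ++ q) (hv : v ∉ p ++ q) (huv : u ≠ v) :
    EL G c L = DFAux.chi (cross G (c u) (c v))
      + DFAux.cnt (fun ℓ => cross G (c u) (c ℓ) ∧ cross G (c v) (c ℓ)) (p ++ q)
      + EL G (Function.update c u (c u ∪ c v)) (p ++ u :: q) := by
  have hperm : L.Perm (u :: v :: (p ++ q)) := by
    rcases hL with rfl | rfl
    · exact (List.perm_middle).trans (List.Perm.cons u List.perm_middle)
    · exact (List.perm_middle).trans
        ((List.Perm.cons v List.perm_middle).trans (List.Perm.swap u v _))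
  have hperm2 : (p ++ u :: q).Perm (u :: (p ++ q)) := List.perm_middle
  rw [EL_perm G c hperm, EL_perm G _ hperm2]
  have hagc : ∀ x ∈ p ++ q, Function.update c u (c u ∪ c v) x = c x := by
    intro x hx
    exact Function.update_of_ne (fun he => hu (by rw [← he]; exact hx)) _ _
  simp only [EL, cnt]
  have h1 : cnt (fun b => cross G (Function.update c u (c u ∪ c v) u)
        (Function.update c u (c u ∪ c v) b)) (p ++ q)
      = cnt (fun b => cross G (c u) (c b) ∨ cross G (c v) (c b)) (p ++ q) :=
    cnt_congr (fun b hb => by rw [hagc b hb, Function.update_self]; exact cross_union_left)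
  rw [h1, EL_congr hagc]
  have h2 := cnt_add_cnt (fun b => cross G (c u) (c b)) (fun b => cross G (c v) (c b)) (p ++ q)
  omega

/-! ### The adjacency invariant -/

def Inv (G H : SimpleGraph V) (c : V → Finset V) (L : List V) : Prop :=
  ∀ x y, H.Adj x y ↔ x ∈ L ∧ y ∈ L ∧ x ≠ y ∧ cross G (c x) (c y)

lemma Inv_step {G H : SimpleGraph V} {c : V → Finset V} {L : List V} {u v : V} {p q : List V}
    (hInv : Inv G H c L) (hL : L = p ++ u :: v :: q ∨ L = p ++ v :: u :: q)
    (hnd : L.Nodup) :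
    Inv G (mergeG H u v) (Function.update c u (c u ∪ c v)) (p ++ u :: q) := by
  obtain ⟨huL, hvL, huv, hupq, hvpq, hnd'', hmem'', hmempq⟩ := cherry_facts hL hnd
  have hsub : ∀ z, c z ⊆ Function.update c u (c u ∪ c v) z := by
    intro z
    by_cases hz : z = u
    · subst hz; rw [Function.update_self]; exact Finset.subset_union_left
    · rw [Function.update_of_ne hz]
  have hvsub : c v ⊆ Function.update c u (c u ∪ c v) u := by
    rw [Function.update_self]; exact Finset.subset_union_right
  have hne : ∀ z, z ≠ u → Function.update c u (c u ∪ c v) z = c z :=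
    fun z hz => Function.update_of_ne hz _ _
  intro x y
  constructor
  · rintro ⟨hxy, hxv, hyv, h | ⟨hxu, h⟩ | ⟨hyu, h⟩⟩
    · obtain ⟨hxL, hyL, _, hcr⟩ := (hInv x y).mp h
      exact ⟨(hmem'' x).mpr ⟨hxL, hxv⟩, (hmem'' y).mpr ⟨hyL, hyv⟩, hxy,
        cross_mono (hsub x) (hsub y) hcr⟩
    · obtain ⟨_, hyL, _, hcr⟩ := (hInv v y).mp h
      refine ⟨(hmem'' x).mpr ⟨by rw [hxu]; exact huL, hxv⟩,
        (hmem'' y).mpr ⟨hyL, hyv⟩, hxy, ?_⟩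
      rw [hxu]
      exact cross_mono hvsub (hsub y) hcr
    · obtain ⟨_, hxL, _, hcr⟩ := (hInv v x).mp h
      refine ⟨(hmem'' x).mpr ⟨hxL, hxv⟩,
        (hmem'' y).mpr ⟨by rw [hyu]; exact huL, hyv⟩, hxy, ?_⟩
      rw [hyu]
      exact cross_symm.mp (cross_mono hvsub (hsub x) hcr)
  · rintro ⟨hx, hy, hxy, hcr⟩
    obtain ⟨hxL, hxv⟩ := (hmem'' x).mp hx
    obtain ⟨hyL, hyv⟩ := (hmem'' y).mp hy
    refine ⟨hxy, hxv, hyv, ?_⟩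
    by_cases hxu : x = u
    · subst hxu
      rw [Function.update_self, hne y (Ne.symm hxy)] at hcr
      rcases cross_union_left.mp hcr with hc | hc
      · exact Or.inl ((hInv x y).mpr ⟨hxL, hyL, hxy, hc⟩)
      · exact Or.inr (Or.inl ⟨rfl, (hInv v y).mpr ⟨hvL, hyL, fun he => hyv he.symm, hc⟩⟩)
    · by_cases hyu : y = u
      · subst hyu
        rw [Function.update_self, hne x hxu] at hcr
        rcases cross_union_left.mp (cross_symm.mp hcr) with hc | hc
        · exact Or.inl ((hInv x y).mpr ⟨hxL, hyL, hxy, cross_symm.mp hc⟩)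
        · exact Or.inr (Or.inr ⟨rfl, (hInv v x).mpr ⟨hvL, hxL, fun he => hxv he.symm, hc⟩⟩)
      · rw [hne x hxu, hne y hyu] at hcr
        exact Or.inl ((hInv x y).mpr ⟨hxL, hyL, hxy, hcr⟩)

lemma extI_eq [Fintype V] {G H : SimpleGraph V} {c : V → Finset V} {L : List V} {u v : V}
    {p q : List V} (hInv : Inv G H c L)
    (hL : L = p ++ u :: v :: q ∨ L = p ++ v :: u :: q) (hnd : L.Nodup) :
    extI H u v = DFAux.cnt (fun ℓ => cross G (c u) (c ℓ) ∧ cross G (c v) (c ℓ)) (p ++ q) := by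
  obtain ⟨huL, hvL, huv, hupq, hvpq, hnd'', hmem'', hmempq⟩ := cherry_facts hL hnd
  have hndpq : (p ++ q).Nodup :=
    hnd''.sublist (List.Sublist.append_left (List.sublist_cons_self u q) p)
  have hset : H.neighborFinset u ∩ H.neighborFinset v =
      (p ++ q).toFinset.filter (fun ℓ => cross G (c u) (c ℓ) ∧ cross G (c v) (c ℓ)) := by
    ext x
    simp only [Finset.mem_inter, SimpleGraph.mem_neighborFinset, Finset.mem_filter,
      List.mem_toFinset]
    rw [hInv u x, hInv v x, hmempq x]
    constructor
    · rintro ⟨⟨_, hxL, hux, hcu⟩, ⟨_, _, hvx, hcv⟩⟩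
      exact ⟨⟨hxL, fun he => hux he.symm, fun he => hvx he.symm⟩, hcu, hcv⟩
    · rintro ⟨⟨hxL, hxu, hxv⟩, hcu, hcv⟩
      exact ⟨⟨huL, hxL, fun he => hxu he.symm, hcu⟩, ⟨hvL, hxL, fun he => hxv he.symm, hcv⟩⟩
  rw [extI]
  rw [hset]
  exact cnt_card hndpq _

lemma deltaI_eq {G H : SimpleGraph V} {c : V → Finset V} {L : List V} {u v : V}
    {p q : List V} (hInv : Inv G H c L)
    (hL : L = p ++ u :: v :: q ∨ L = p ++ v :: u :: q) (hnd : L.Nodup) :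
    deltaI H u v = DFAux.chi (cross G (c u) (c v)) := by
  obtain ⟨huL, hvL, huv, _⟩ := cherry_facts hL hnd
  have hiff : H.Adj u v ↔ cross G (c u) (c v) := by
    rw [hInv u v]
    exact ⟨fun h => h.2.2.2, fun h => ⟨huL, hvL, huv, h⟩⟩
  simp [deltaI, chi, hiff]

/-! ### The main induction -/

lemma main [Fintype V] (G : SimpleGraph V) {Γ' : Forest V} {steps : List (V × V)}
    {Γ₀ : Forest V} (hF : FUnfold Γ' steps Γ₀) :
    IsSeed Γ₀ → ∀ (H : SimpleGraph V) (c : V → Finset V), (Forest.leaves Γ').Nodup →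
      Inv G H c (Forest.leaves Γ') →
      extNum H steps + Kf G c Γ' = EL G c (Forest.leaves Γ') := by
  induction hF with
  | nil Γ =>
    intro hseed H c _ _
    simp [extNum, seed_Kf G c hseed]
  | @cons Γa Γb Γz u v steps hFS hFU ih =>
    intro hseed H c hnd hInv
    obtain ⟨p, q, hL, hL''⟩ := FS_leaves hFS
    obtain ⟨huL, hvL, huv, hupq, hvpq, hnd'', hmem'', hmempq⟩ := cherry_facts hL hnd
    have hnd2 : (Forest.leaves Γb).Nodup := by rw [hL'']; exact hnd''
    have hInv2 : Inv G (mergeG H u v) (Function.update c u (c u ∪ c v))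
        (Forest.leaves Γb) := by
      rw [hL'']; exact Inv_step hInv hL hnd
    have hK := (FS_Kf G hFS hnd c).2
    have hIH := ih hseed (mergeG H u v) (Function.update c u (c u ∪ c v)) hnd2 hInv2
    rw [hL''] at hIH
    have hext := extI_eq (G := G) hInv hL hnd
    have hEL := EL_cherry G c hL hupq hvpq huv
    simp only [extNum]
    omega

end DFAux

/-- the extension number `e(θ)` is the same for every duplicate
sequence compatible with the duplication forest `Γ` of the network `G`. -/
theorem stmt7 [Fintype V] (G : SimpleGraph V) (Γ : Forest V)
    (hnd : (Forest.leaves Γ).Nodup) (hall : ∀ x : V, x ∈ Forest.leaves Γ)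
    (s₁ s₂ : List (V × V)) (Γ₁ Γ₂ : Forest V)
    (h₁ : FUnfold Γ s₁ Γ₁) (hseed₁ : IsSeed Γ₁)
    (h₂ : FUnfold Γ s₂ Γ₂) (hseed₂ : IsSeed Γ₂) :
    extNum G s₁ = extNum G s₂ := by
  have hInv0 : DFAux.Inv G G (fun x => ({x} : Finset V)) (Forest.leaves Γ) := by
    intro x y
    constructor
    · intro h
      exact ⟨hall x, hall y, h.ne, DFAux.cross_singleton.mpr h⟩
    · rintro ⟨_, _, _, hcr⟩
      exact DFAux.cross_singleton.mp hcr
  have e1 := DFAux.main G h₁ hseed₁ G (fun x => ({x} : Finset V)) hnd hInv0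
  have e2 := DFAux.main G h₂ hseed₂ G (fun x => ({x} : Finset V)) hnd hInv0
  omega
end
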